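/- A sublattice Λ ⊆ ℤ² of rank 2 is well-rounded if and only if it has a basis x, y with ‖x‖ = ‖y‖ and |xᵗy| ≤ (1/2)·‖x‖·‖y‖. Moreover, if this is the case, then the set of minimal vectors of Λ is S(Λ) = {x, −x, y, −y}; in particular, a minimal basis for Λ is unique up to ± signs and reordering. -/
import Mathlib


/-- The standard inner product of two vectors in `ℤ²`. -/
def dot2 (x y : Fin 2 → ℤ) : ℤ := x 0 * y 0 + x 1 * y 1

/-- The squared Euclidean norm of a vector in `ℤ²`. -/
def normSq2 (x : Fin 2 → ℤ) : ℤ := x 0 ^ 2 + x 1 ^ 2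

/-- The determinant of the pair of vectors `x`, `y` in `ℤ²`. -/
def det2 (x y : Fin 2 → ℤ) : ℤ := x 0 * y 1 - x 1 * y 0

/-- A sublattice of `ℤ²` is full-rank (rank 2) if it contains two linearly
independent vectors, i.e. its elements span `ℝ²`. -/
def IsFullRank (L : AddSubgroup (Fin 2 → ℤ)) : Prop :=
  ∃ x ∈ L, ∃ y ∈ L, det2 x y ≠ 0

/-- `x` is a minimal vector of the lattice `L`: it is a nonzero vector of `L` of
least Euclidean norm, i.e. `‖x‖ = |L|`. -/
def IsMinVec (L : AddSubgroup (Fin 2 → ℤ)) (x : Fin 2 → ℤ) : Prop :=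
  x ∈ L ∧ x ≠ 0 ∧ ∀ y ∈ L, y ≠ 0 → normSq2 x ≤ normSq2 y

/-- `L` is well-rounded: its minimal vectors span `ℝ²`, i.e. there exist two
linearly independent minimal vectors. -/
def IsWellRounded (L : AddSubgroup (Fin 2 → ℤ)) : Prop :=
  ∃ x y, IsMinVec L x ∧ IsMinVec L y ∧ det2 x y ≠ 0

/-- The sublattice of `ℤ²` spanned over `ℤ` by the vectors `v` and `w`. -/
def latticeOf (v w : Fin 2 → ℤ) : AddSubgroup (Fin 2 → ℤ) :=
  AddSubgroup.closure {v, w}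

/-! ### Auxiliary arithmetic lemmas -/

lemma normSq2_pos {x : Fin 2 → ℤ} (hx : x ≠ 0) : 0 < normSq2 x := by
  have h : x 0 ≠ 0 ∨ x 1 ≠ 0 := by
    by_contra h; push_neg at h
    exact hx (funext fun i => by fin_cases i <;> simp [h.1, h.2])
  unfold normSq2
  rcases h with h | h <;> rcases h.lt_or_gt with h | h <;>
    nlinarith [sq_nonneg (x 0), sq_nonneg (x 1)]

lemma lagrange (x y : Fin 2 → ℤ) :
    det2 x y ^ 2 + dot2 x y ^ 2 = normSq2 x * normSq2 y := by
  unfold det2 dot2 normSq2; ring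

lemma no3 : ∀ M : ℕ, ∀ D : ℕ, M ≠ 0 → D ^ 2 ≠ 3 * M ^ 2 := by
  intro M
  induction M using Nat.strong_induction_on with
  | _ M ih =>
    intro D hM h
    have h3D : 3 ∣ D := by
      have hp : Nat.Prime 3 := by norm_num
      exact hp.dvd_of_dvd_pow (h ▸ Dvd.intro (M ^ 2) rfl)
    obtain ⟨D', rfl⟩ := h3D
    have h2 : M ^ 2 = 3 * D' ^ 2 := by ring_nf at h ⊢; omega
    have h3M : 3 ∣ M := by
      have hp : Nat.Prime 3 := by norm_num
      exact hp.dvd_of_dvd_pow (h2 ▸ Dvd.intro (D' ^ 2) rfl)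
    obtain ⟨M', rfl⟩ := h3M
    have hM' : M' ≠ 0 := by omega
    have : D' ^ 2 = 3 * M' ^ 2 := by ring_nf at h2 ⊢; omega
    exact ih M' (by omega) D' hM' this

lemma no_sqrt3 (d m : ℤ) (hm : 0 < m) : 4 * d ^ 2 ≠ 3 * m ^ 2 := by
  intro h
  have hM : m.natAbs ≠ 0 := by simp [Int.natAbs_ne_zero]; omega
  apply no3 m.natAbs (2 * d).natAbs hM
  have h' : ((2 * d) ^ 2).natAbs = ((3 : ℤ) * m ^ 2).natAbs := by
    rw [show ((2:ℤ) * d) ^ 2 = 3 * m ^ 2 by linarith]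
  simpa [Int.natAbs_mul, Int.natAbs_pow] using h'

lemma one_le_quad {a b : ℤ} (h : a ≠ 0 ∨ b ≠ 0) : 1 ≤ a ^ 2 - a * b + b ^ 2 := by
  have h0 : 0 < a ^ 2 - a * b + b ^ 2 := by
    rcases h with h | h <;> rcases h.lt_or_gt with h | h <;>
      nlinarith [sq_nonneg (a - 2 * b), sq_nonneg (2 * a - b)]
  omega

lemma one_le_quad' {a b : ℤ} (h : a ≠ 0 ∨ b ≠ 0) : 1 ≤ a ^ 2 + a * b + b ^ 2 := by
  have := one_le_quad (a := a) (b := -b)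
    (by rcases h with h | h; exact Or.inl h; exact Or.inr (neg_ne_zero.mpr h))
  nlinarith

lemma key_ge {m t a b : ℤ} (hm : 0 < m) (ht : 4 * t ^ 2 ≤ m ^ 2)
    (hab : a ≠ 0 ∨ b ≠ 0) : m ≤ a ^ 2 * m + 2 * a * b * t + b ^ 2 * m := by
  have ht1 : 2 * t ≤ m := by nlinarith
  have ht2 : -m ≤ 2 * t := by nlinarith
  rcases le_or_gt 0 (a * b) with h | h
  · have h1 := one_le_quad hab
    nlinarith [mul_nonneg h (by linarith : (0:ℤ) ≤ m + 2 * t)]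
  · have h1 := one_le_quad' hab
    nlinarith [mul_nonneg (by linarith : (0:ℤ) ≤ -(a * b)) (by linarith : (0:ℤ) ≤ m - 2 * t)]

lemma key_eq {m t a b : ℤ} (hm : 0 < m) (ht : 4 * t ^ 2 < m ^ 2)
    (hab : a ≠ 0 ∨ b ≠ 0) (heq : a ^ 2 * m + 2 * a * b * t + b ^ 2 * m = m) :
    (a = 0 ∧ (b = 1 ∨ b = -1)) ∨ (b = 0 ∧ (a = 1 ∨ a = -1)) := by
  have ht1 : 2 * t < m := by nlinarith
  have ht2 : -m < 2 * t := by nlinarith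
  have hab0 : a * b = 0 := by
    by_contra h
    rcases (Ne.lt_or_gt h).symm with hp | hn
    · have h1 := one_le_quad hab
      nlinarith [mul_pos hp (by linarith : (0:ℤ) < m + 2 * t)]
    · have h1 := one_le_quad' hab
      nlinarith [mul_pos (by linarith : (0:ℤ) < -(a * b)) (by linarith : (0:ℤ) < m - 2 * t)]
  have hsum : a ^ 2 + b ^ 2 = 1 := by
    have h2 : (a ^ 2 + b ^ 2) * m = 1 * m := by nlinarith
    exact mul_right_cancel₀ (ne_of_gt hm) h2
  rcases mul_eq_zero.mp hab0 with h | h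
  · left
    refine ⟨h, ?_⟩
    have hb : b ^ 2 = 1 := by rw [h] at hsum; linarith
    have : (b - 1) * (b + 1) = 0 := by linear_combination hb
    rcases mul_eq_zero.mp this with h' | h'
    · exact Or.inl (by linarith)
    · exact Or.inr (by linarith)
  · right
    refine ⟨h, ?_⟩
    have ha : a ^ 2 = 1 := by rw [h] at hsum; linarith
    have : (a - 1) * (a + 1) = 0 := by linear_combination ha
    rcases mul_eq_zero.mp this with h' | h'
    · exact Or.inl (by linarith)
    · exact Or.inr (by linarith)

lemma exists_round_pos (p : ℤ) {d : ℤ} (hd : 0 < d) :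
    ∃ a : ℤ, 4 * (p - a * d) ^ 2 ≤ d ^ 2 := by
  have h0 : 0 ≤ p % d := Int.emod_nonneg p (ne_of_gt hd)
  have h1 : p % d < d := Int.emod_lt_of_pos p hd
  have hr : p - (p / d) * d = p % d := by
    have := Int.mul_ediv_add_emod p d; linarith
  rcases le_or_gt (2 * (p % d)) d with h | h
  · exact ⟨p / d, by nlinarith⟩
  · refine ⟨p / d + 1, ?_⟩
    have hr2 : p - (p / d + 1) * d = p % d - d := by linarith
    rw [hr2]; nlinarith

lemma exists_round (p : ℤ) {d : ℤ} (hd : d ≠ 0) :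
    ∃ a : ℤ, 4 * (p - a * d) ^ 2 ≤ d ^ 2 := by
  rcases hd.lt_or_gt with h | h
  · obtain ⟨a, ha⟩ := exists_round_pos p (d := -d) (by linarith)
    exact ⟨-a, by nlinarith⟩
  · exact exists_round_pos p h

lemma round_contra {m t d p q N : ℤ} (hm : 0 < m) (ht1 : -m ≤ 2 * t) (ht2 : 2 * t ≤ m)
    (hd : d ≠ 0) (hp : 4 * p ^ 2 ≤ d ^ 2) (hq : 4 * q ^ 2 ≤ d ^ 2) (hN : m ≤ N)
    (hEq : d ^ 2 * N = p ^ 2 * m + 2 * p * q * t + q ^ 2 * m) : False := by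
  have hd2 : 1 ≤ d ^ 2 := by rcases hd.lt_or_gt with h | h <;> nlinarith
  have h4pq1 : 4 * (p * q) ≤ d ^ 2 := by nlinarith [sq_nonneg (2 * p - 2 * q)]
  have h4pq2 : -(d ^ 2) ≤ 4 * (p * q) := by nlinarith [sq_nonneg (2 * p + 2 * q)]
  have hcross : 8 * (p * q) * t ≤ d ^ 2 * m := by
    nlinarith [mul_nonneg (by linarith : (0:ℤ) ≤ d ^ 2 - 4 * (p * q))
        (by linarith : (0:ℤ) ≤ m + 2 * t),
      mul_nonneg (by linarith : (0:ℤ) ≤ d ^ 2 + 4 * (p * q))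
        (by linarith : (0:ℤ) ≤ m - 2 * t)]
  nlinarith [mul_le_mul_of_nonneg_right hp (le_of_lt hm),
    mul_le_mul_of_nonneg_right hq (le_of_lt hm),
    mul_le_mul_of_nonneg_left hN (by linarith : (0:ℤ) ≤ d ^ 2),
    mul_pos (by linarith : (0:ℤ) < d ^ 2) hm]

/-! ### Vector lemmas -/

lemma combo_apply (a b : ℤ) (x y : Fin 2 → ℤ) (i : Fin 2) :
    (a • x + b • y) i = a * x i + b * y i := by
  simp [Pi.add_apply, Pi.smul_apply, smul_eq_mul]

lemma normSq2_combo (a b : ℤ) (x y : Fin 2 → ℤ) :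
    normSq2 (a • x + b • y) =
      a ^ 2 * normSq2 x + 2 * a * b * dot2 x y + b ^ 2 * normSq2 y := by
  simp only [normSq2, dot2, combo_apply]; ring

lemma normSq2_neg (x : Fin 2 → ℤ) : normSq2 (-x) = normSq2 x := by
  simp only [normSq2, Pi.neg_apply]; ring

lemma normSq2_add (x y : Fin 2 → ℤ) :
    normSq2 (x + y) = normSq2 x + 2 * dot2 x y + normSq2 y := by
  simp only [normSq2, dot2, Pi.add_apply]; ring

lemma normSq2_sub (x y : Fin 2 → ℤ) :
    normSq2 (x - y) = normSq2 x - 2 * dot2 x y + normSq2 y := by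
  simp only [normSq2, dot2, Pi.sub_apply]; ring

lemma det2_left_ne {x y : Fin 2 → ℤ} (h : det2 x y ≠ 0) : x ≠ 0 := by
  rintro rfl; exact h (by simp [det2])

lemma det2_right_ne {x y : Fin 2 → ℤ} (h : det2 x y ≠ 0) : y ≠ 0 := by
  rintro rfl; exact h (by simp [det2])

lemma mem_pair_left {x y : Fin 2 → ℤ} : x ∈ AddSubgroup.closure {x, y} :=
  AddSubgroup.subset_closure (by simp)

lemma mem_pair_right {x y : Fin 2 → ℤ} : y ∈ AddSubgroup.closure {x, y} :=
  AddSubgroup.subset_closure (by simp)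

/-! ### Main structural lemmas -/

/-- A basis with equal norms and small inner product consists of minimal vectors. -/
lemma min_of_basis {Λ : AddSubgroup (Fin 2 → ℤ)} {x y : Fin 2 → ℤ}
    (hcl : AddSubgroup.closure {x, y} = Λ) (hd : det2 x y ≠ 0)
    (hnorm : normSq2 x = normSq2 y)
    (hdot : 4 * dot2 x y ^ 2 ≤ normSq2 x * normSq2 y) :
    IsMinVec Λ x ∧ IsMinVec Λ y := by
  have hx0 := det2_left_ne hd
  have hy0 := det2_right_ne hd
  have hm : 0 < normSq2 x := normSq2_pos hx0
  have ht : 4 * dot2 x y ^ 2 ≤ normSq2 x ^ 2 := by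
    rw [← hnorm] at hdot; nlinarith
  have hmin : ∀ w ∈ Λ, w ≠ 0 → normSq2 x ≤ normSq2 w := by
    intro w hw hw0
    rw [← hcl] at hw
    obtain ⟨a, b, hab⟩ := AddSubgroup.mem_closure_pair.mp hw
    have hab0 : a ≠ 0 ∨ b ≠ 0 := by
      by_contra hc; push_neg at hc
      exact hw0 (by rw [← hab, hc.1, hc.2]; simp)
    rw [← hab, normSq2_combo, ← hnorm]
    exact key_ge hm ht hab0
  exact ⟨⟨hcl ▸ mem_pair_left, hx0, hmin⟩,
    ⟨hcl ▸ mem_pair_right, hy0, fun w hw hw0 => hnorm ▸ hmin w hw hw0⟩⟩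

/-- Two independent minimal vectors generate the lattice. -/
lemma closure_of_min {Λ : AddSubgroup (Fin 2 → ℤ)} {x y : Fin 2 → ℤ}
    (hx : IsMinVec Λ x) (hy : IsMinVec Λ y) (hd : det2 x y ≠ 0)
    (hnorm : normSq2 x = normSq2 y)
    (ht1 : -(normSq2 x) ≤ 2 * dot2 x y) (ht2 : 2 * dot2 x y ≤ normSq2 x) :
    AddSubgroup.closure {x, y} = Λ := by
  apply le_antisymm
  · rw [AddSubgroup.closure_le]
    rintro w hw
    rcases hw with rfl | hw
    · exact hx.1
    · rw [Set.mem_singleton_iff] at hw; subst hw; exact hy.1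
  · intro z hz
    obtain ⟨a, ha⟩ := exists_round (det2 z y) hd
    obtain ⟨b, hb⟩ := exists_round (det2 x z) hd
    rw [AddSubgroup.mem_closure_pair]
    refine ⟨a, b, ?_⟩
    set w : Fin 2 → ℤ := z - a • x - b • y with hwdef
    have hwΛ : w ∈ Λ := sub_mem (sub_mem hz (zsmul_mem hx.1 a)) (zsmul_mem hy.1 b)
    suffices hw0 : w = 0 by
      have : z - (a • x + b • y) = 0 := by rw [← sub_sub]; exact hw0
      exact (sub_eq_zero.mp this).symm
    by_contra hne
    have hc0 : w 0 = z 0 - a * x 0 - b * y 0 := by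
      simp [hwdef, Pi.sub_apply, Pi.smul_apply, smul_eq_mul]
    have hc1 : w 1 = z 1 - a * x 1 - b * y 1 := by
      simp [hwdef, Pi.sub_apply, Pi.smul_apply, smul_eq_mul]
    have e0 : det2 x y * w 0 =
        (det2 z y - a * det2 x y) * x 0 + (det2 x z - b * det2 x y) * y 0 := by
      rw [hc0]; simp only [det2]; ring
    have e1 : det2 x y * w 1 =
        (det2 z y - a * det2 x y) * x 1 + (det2 x z - b * det2 x y) * y 1 := by
      rw [hc1]; simp only [det2]; ring
    have hkey : det2 x y ^ 2 * normSq2 w =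
        (det2 z y - a * det2 x y) ^ 2 * normSq2 x +
          2 * (det2 z y - a * det2 x y) * (det2 x z - b * det2 x y) * dot2 x y +
          (det2 x z - b * det2 x y) ^ 2 * normSq2 y := by
      calc det2 x y ^ 2 * normSq2 w = (det2 x y * w 0) ^ 2 + (det2 x y * w 1) ^ 2 := by
            simp only [normSq2]; ring
        _ = ((det2 z y - a * det2 x y) * x 0 + (det2 x z - b * det2 x y) * y 0) ^ 2 +
            ((det2 z y - a * det2 x y) * x 1 + (det2 x z - b * det2 x y) * y 1) ^ 2 := by
            rw [e0, e1]
        _ = _ := by simp only [normSq2, dot2]; ring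
    rw [← hnorm] at hkey
    have hm : 0 < normSq2 x := normSq2_pos hx.2.1
    have hN : normSq2 x ≤ normSq2 w := hx.2.2 w hwΛ hne
    exact round_contra hm ht1 ht2 hd ha hb hN hkey

/-- A full-rank sublattice `Λ ⊆ ℤ²` is well-rounded if and only if it has a basis `x, y`
with `‖x‖ = ‖y‖` and `|xᵗy| ≤ (1/2)‖x‖‖y‖` (equivalently `4(xᵗy)² ≤ ‖x‖²‖y‖²`).
Moreover, in that case the set of minimal vectors of `Λ` is `{x, −x, y, −y}`. -/
theorem stmt0 (Λ : AddSubgroup (Fin 2 → ℤ)) (hfr : IsFullRank Λ) :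
    (IsWellRounded Λ ↔
      ∃ x y : Fin 2 → ℤ, AddSubgroup.closure {x, y} = Λ ∧ det2 x y ≠ 0 ∧
        normSq2 x = normSq2 y ∧ 4 * dot2 x y ^ 2 ≤ normSq2 x * normSq2 y) ∧
    (∀ x y : Fin 2 → ℤ, AddSubgroup.closure {x, y} = Λ → det2 x y ≠ 0 →
      normSq2 x = normSq2 y → 4 * dot2 x y ^ 2 ≤ normSq2 x * normSq2 y →
      {z : Fin 2 → ℤ | IsMinVec Λ z} = {x, -x, y, -y}) := by
  constructor
  · constructor
    · rintro ⟨x, y, hx, hy, hd⟩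
      have hnorm : normSq2 x = normSq2 y :=
        le_antisymm (hx.2.2 y hy.1 hy.2.1) (hy.2.2 x hx.1 hx.2.1)
      have hm : 0 < normSq2 x := normSq2_pos hx.2.1
      have hadd : x + y ≠ 0 := by
        intro h
        have hy' : y = -x := eq_neg_of_add_eq_zero_right h
        apply hd
        rw [hy']
        simp only [det2, Pi.neg_apply]; ring
      have hsub : x - y ≠ 0 := by
        intro h
        have hy' : y = x := (sub_eq_zero.mp h).symm
        apply hd
        rw [hy']
        simp only [det2]; ring
      have h1 := hx.2.2 _ (add_mem hx.1 hy.1) hadd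
      have h2 := hx.2.2 _ (sub_mem hx.1 hy.1) hsub
      rw [normSq2_add] at h1
      rw [normSq2_sub] at h2
      rw [← hnorm] at h1 h2
      have ht1 : -(normSq2 x) ≤ 2 * dot2 x y := by linarith
      have ht2 : 2 * dot2 x y ≤ normSq2 x := by linarith
      refine ⟨x, y, closure_of_min hx hy hd hnorm ht1 ht2, hd, hnorm, ?_⟩
      rw [← hnorm]; nlinarith
    · rintro ⟨x, y, hcl, hd, hnorm, hdot⟩
      obtain ⟨hxm, hym⟩ := min_of_basis hcl hd hnorm hdot
      exact ⟨x, y, hxm, hym, hd⟩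
  · intro x y hcl hd hnorm hdot
    obtain ⟨hxm, hym⟩ := min_of_basis hcl hd hnorm hdot
    have hm : 0 < normSq2 x := normSq2_pos hxm.2.1
    have htlt : 4 * dot2 x y ^ 2 < normSq2 x ^ 2 := by
      have hlag := lagrange x y
      rw [← hnorm] at hlag hdot
      rcases lt_or_eq_of_le hdot with h | h
      · nlinarith
      · exfalso
        apply no_sqrt3 (det2 x y) (normSq2 x) hm
        linear_combination 4 * hlag - h
    ext z
    simp only [Set.mem_setOf_eq, Set.mem_insert_iff, Set.mem_singleton_iff]
    constructor
    · intro hz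
      have hzΛ := hz.1
      rw [← hcl] at hzΛ
      obtain ⟨a, b, hab⟩ := AddSubgroup.mem_closure_pair.mp hzΛ
      have hab0 : a ≠ 0 ∨ b ≠ 0 := by
        by_contra hc; push_neg at hc
        exact hz.2.1 (by rw [← hab, hc.1, hc.2]; simp)
      have hNz : normSq2 z = normSq2 x :=
        le_antisymm (hz.2.2 x hxm.1 hxm.2.1) (hxm.2.2 z hz.1 hz.2.1)
      have heq : a ^ 2 * normSq2 x + 2 * a * b * dot2 x y + b ^ 2 * normSq2 x
          = normSq2 x := by
        have h := normSq2_combo a b x y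
        rw [← hnorm] at h
        rw [← h, hab, hNz]
      rcases key_eq hm htlt hab0 heq with ⟨ha, hb | hb⟩ | ⟨hb, ha | ha⟩
      · right; right; left
        rw [← hab, ha, hb]; simp
      · right; right; right
        rw [← hab, ha, hb]; simp
      · left
        rw [← hab, ha, hb]; simp
      · right; left
        rw [← hab, ha, hb]; simp
    · rintro (rfl | rfl | rfl | rfl)
      · exact hxm
      · exact ⟨neg_mem hxm.1, neg_ne_zero.mpr hxm.2.1,
          fun w hw hw0 => (normSq2_neg x) ▸ hxm.2.2 w hw hw0⟩
      · exact hym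
      · exact ⟨neg_mem hym.1, neg_ne_zero.mpr hym.2.1,
          fun w hw hw0 => (normSq2_neg y) ▸ hym.2.2 w hw hw0⟩
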